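/- Gamma-Coefficient: for all integers n and k, the function ε ↦ Γ(n+1+ε)/(Γ(k+1+ε)·Γ(n-k+1+ε)) of a real variable ε tends, as ε tends to 0 through nonzero real values, to the limit L, where L = ⌊n choose k⌉ if (n ≥ k ≥ 0) or (k ≥ 0 > n) or (0 > n ≥ k), and L = 0 if (k > n ≥ 0) or (n ≥ 0 > k) or (0 > k > n). (In particular the Gamma-coefficient ⟨n choose k⟩ := lim_{ε→0} Γ(n+1+ε)/(Γ(k+1+ε)Γ(n-k+1+ε)) exists and is always an integer.) -/

import Mathlib

/-- Roman factorial of an integer, as a rational number. -/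
def romanFactorial (n : ℤ) : ℚ :=
  if 0 ≤ n then (n.toNat.factorial : ℚ)
  else (-1 : ℚ) ^ (n + 1) / ((-n - 1).toNat.factorial : ℚ)

/-- Roman coefficient of two integers. -/
def romanCoeff (n k : ℤ) : ℚ :=
  romanFactorial n / (romanFactorial k * romanFactorial (n - k))

open Filter Topology

private lemma tendsto_gamma_fact (m : ℕ) :
    Tendsto (fun ε : ℝ => Real.Gamma ((m:ℝ) + 1 + ε)) (𝓝[≠] (0:ℝ))
      (𝓝 (m.factorial : ℝ)) := by
  have h1 : ContinuousAt Real.Gamma ((m:ℝ) + 1) := by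
    refine (Real.differentiableAt_Gamma fun j => ?_).continuousAt
    have h0 : (0:ℝ) < (m:ℝ) + 1 := by positivity
    intro h; rw [h] at h0
    have : (0:ℝ) ≤ (j:ℝ) := by positivity
    linarith
  have h2 : Tendsto (fun ε : ℝ => (m:ℝ) + 1 + ε) (𝓝[≠] (0:ℝ)) (𝓝 ((m:ℝ) + 1)) := by
    have : Tendsto (fun ε : ℝ => (m:ℝ) + 1 + ε) (𝓝 (0:ℝ)) (𝓝 ((m:ℝ) + 1)) := by
      simpa [Pi.add_def] using (continuous_const.add continuous_id).tendsto (0:ℝ)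
    exact this.mono_left nhdsWithin_le_nhds
  have := h1.tendsto.comp h2
  simpa [Real.Gamma_nat_eq_factorial, Function.comp_def] using this

private lemma tendsto_gamma_pole (p : ℕ) :
    Tendsto (fun ε : ℝ => ε * Real.Gamma (ε - (p:ℝ))) (𝓝[≠] (0:ℝ))
      (𝓝 ((-1:ℝ)^p / (p.factorial : ℝ))) := by
  induction p with
  | zero =>
    have h1 : ContinuousAt Real.Gamma 1 := by
      refine (Real.differentiableAt_Gamma fun j => ?_).continuousAt
      intro h
      have h0 : (0:ℝ) < 1 := one_pos
      rw [h] at h0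
      have : (0:ℝ) ≤ (j:ℝ) := by positivity
      linarith
    have h2 : Tendsto (fun ε : ℝ => ε + 1) (𝓝[≠] (0:ℝ)) (𝓝 (1:ℝ)) := by
      have : Tendsto (fun ε : ℝ => ε + 1) (𝓝 (0:ℝ)) (𝓝 (1:ℝ)) := by
        simpa [Pi.add_def] using (continuous_id.add continuous_const).tendsto (0:ℝ)
      exact this.mono_left nhdsWithin_le_nhds
    have h3 : Tendsto (fun ε : ℝ => Real.Gamma (ε + 1)) (𝓝[≠] (0:ℝ)) (𝓝 (1:ℝ)) := by
      have := h1.tendsto.comp h2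
      simpa [Real.Gamma_one, Function.comp_def] using this
    have heq : (fun ε : ℝ => Real.Gamma (ε + 1)) =ᶠ[𝓝[≠] (0:ℝ)]
        (fun ε : ℝ => ε * Real.Gamma (ε - ((0:ℕ):ℝ))) := by
      filter_upwards [self_mem_nhdsWithin] with ε (hε : ε ≠ 0)
      rw [Real.Gamma_add_one hε]
      norm_num
    have := h3.congr' heq
    norm_num at this ⊢
    exact this
  | succ p ih =>
    have hlin : Tendsto (fun ε : ℝ => ε - ((p:ℝ) + 1)) (𝓝[≠] (0:ℝ))
        (𝓝 (0 - ((p:ℝ)+1))) :=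
      (((continuous_id.sub continuous_const).tendsto (0:ℝ)).mono_left nhdsWithin_le_nhds)
    have hne : (0:ℝ) - ((p:ℝ)+1) ≠ 0 := by
      have : (0:ℝ) < (p:ℝ) + 1 := by positivity
      intro h; linarith [h]
    have hdiv := ih.div hlin hne
    have hev : ∀ᶠ ε in 𝓝[≠] (0:ℝ), ε < 1 :=
      eventually_nhdsWithin_of_eventually_nhds (eventually_lt_nhds one_pos)
    have heq : (fun ε : ℝ => ε * Real.Gamma (ε - (p:ℝ)) / (ε - ((p:ℝ)+1)))
        =ᶠ[𝓝[≠] (0:ℝ)] (fun ε : ℝ => ε * Real.Gamma (ε - ((p+1:ℕ):ℝ))) := by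
      filter_upwards [hev] with ε hε
      have hne2 : ε - ((p:ℝ)+1) ≠ 0 := by
        have : (0:ℝ) ≤ (p:ℝ) := by positivity
        intro h; nlinarith [h]
      have hG : Real.Gamma (ε - (p:ℝ)) = (ε - ((p:ℝ)+1)) * Real.Gamma (ε - ((p:ℝ)+1)) := by
        have h2 := Real.Gamma_add_one hne2
        rw [← h2]; ring_nf
      rw [hG]
      field_simp
      push_cast
      ring
    have := hdiv.congr' heq
    have hf : (p.factorial:ℝ) ≠ 0 := Nat.cast_ne_zero.mpr p.factorial_ne_zero
    have hp1 : ((p:ℝ)+1) ≠ 0 := by positivity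
    have hval : (-1:ℝ)^p / (p.factorial:ℝ) / (0 - ((p:ℝ)+1))
        = (-1:ℝ)^(p+1) / (((p+1).factorial : ℕ) : ℝ) := by
      rw [pow_succ, Nat.factorial_succ]
      push_cast
      rw [div_div, div_eq_div_iff (mul_ne_zero hf hne) (mul_ne_zero hp1 hf)]
      ring
    rw [hval] at this
    exact this

private lemma eps_shuffle {ε : ℝ} (x y : ℝ) (hε : ε ≠ 0) : x / y = (ε * x) / (ε * y) :=
  (mul_div_mul_left x y hε).symm

private lemma eps_cancelA {ε : ℝ} (hε : ε ≠ 0) (x w : ℝ) : x / (ε * w) * ε = x / w := by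
  rw [div_mul_eq_mul_div, mul_comm x ε, mul_div_mul_left x w hε]

private lemma neg_one_zpow_eq_pow (m : ℤ) (p : ℕ) (h : m = -(p:ℤ)) :
    (-1:ℝ)^m = (-1:ℝ)^p := by
  subst h
  rw [zpow_neg, zpow_natCast, ← inv_pow, inv_neg, inv_one]

private lemma fact_ne (m : ℕ) : ((m.factorial : ℕ) : ℝ) ≠ 0 :=
  Nat.cast_ne_zero.mpr m.factorial_ne_zero

private lemma pole_lim_ne (q : ℕ) : (-1:ℝ)^q / (q.factorial : ℝ) ≠ 0 :=
  div_ne_zero (pow_ne_zero _ (by norm_num)) (fact_ne q)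

/-- The Gamma-coefficient limit exists: as `ε → 0` through nonzero values,
`Γ(n+1+ε)/(Γ(k+1+ε)Γ(n-k+1+ε))` tends to `⌊n choose k⌉` in regions 1, 2 and 3,
and to `0` in regions 4, 5 and 6. -/
theorem gammaCoeff_tendsto (n k : ℤ) :
    Filter.Tendsto
      (fun ε : ℝ =>
        Real.Gamma ((n : ℝ) + 1 + ε) /
          (Real.Gamma ((k : ℝ) + 1 + ε) * Real.Gamma (((n - k : ℤ) : ℝ) + 1 + ε)))
      (nhdsWithin 0 {0}ᶜ)
      (nhds (if (n ≥ k ∧ k ≥ 0) ∨ (k ≥ 0 ∧ 0 > n) ∨ (0 > n ∧ n ≥ k) then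
        (romanCoeff n k : ℝ) else 0)) := by
  by_cases hk : 0 ≤ k <;> by_cases hn : 0 ≤ n
  · by_cases hkn : k ≤ n
    · -- region 1 : n ≥ k ≥ 0
      rw [if_pos (Or.inl ⟨hkn, hk⟩)]
      set a := n.toNat with ha'
      set b := k.toNat with hb'
      set c := (n-k).toNat with hc'
      have ha : ((a:ℕ):ℝ) = (n:ℝ) := by exact_mod_cast congrArg (Int.cast : ℤ → ℝ) (Int.toNat_of_nonneg hn)
      have hb : ((b:ℕ):ℝ) = (k:ℝ) := by exact_mod_cast congrArg (Int.cast : ℤ → ℝ) (Int.toNat_of_nonneg hk)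
      have hc : ((c:ℕ):ℝ) = ((n-k:ℤ):ℝ) := by
        exact_mod_cast congrArg (Int.cast : ℤ → ℝ) (Int.toNat_of_nonneg (by omega : (0:ℤ) ≤ n - k))
      have hfun : (fun ε : ℝ =>
          Real.Gamma ((n : ℝ) + 1 + ε) /
            (Real.Gamma ((k : ℝ) + 1 + ε) * Real.Gamma (((n - k : ℤ) : ℝ) + 1 + ε)))
          = fun ε : ℝ => Real.Gamma ((a:ℝ) + 1 + ε) /
            (Real.Gamma ((b:ℝ) + 1 + ε) * Real.Gamma ((c:ℝ) + 1 + ε)) := by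
        funext ε; rw [ha, hb, hc]
      rw [hfun]
      have hT := (tendsto_gamma_fact a).div ((tendsto_gamma_fact b).mul (tendsto_gamma_fact c))
        (mul_ne_zero (fact_ne b) (fact_ne c))
      have hval : ((romanCoeff n k : ℚ) : ℝ)
          = (a.factorial:ℝ) / ((b.factorial:ℝ) * (c.factorial:ℝ)) := by
        simp only [romanCoeff, romanFactorial, if_pos hn, if_pos hk,
          if_pos (by omega : (0:ℤ) ≤ n - k)]
        push_cast
        ring
      rw [hval]
      exact hT
    · -- region 4 : k > n ≥ 0, limit 0
      rw [if_neg (by omega)]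
      set a := n.toNat with ha'
      set b := k.toNat with hb'
      set q := (k-n-1).toNat with hq'
      have ha : ((a:ℕ):ℝ) = (n:ℝ) := by exact_mod_cast congrArg (Int.cast : ℤ → ℝ) (Int.toNat_of_nonneg hn)
      have hb : ((b:ℕ):ℝ) = (k:ℝ) := by exact_mod_cast congrArg (Int.cast : ℤ → ℝ) (Int.toNat_of_nonneg hk)
      have hq : ((q:ℕ):ℝ) = (k:ℝ) - (n:ℝ) - 1 := by
        have := congrArg (Int.cast : ℤ → ℝ) (Int.toNat_of_nonneg (by omega : (0:ℤ) ≤ k - n - 1))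
        push_cast at this ⊢
        exact_mod_cast this
      have hfun : (fun ε : ℝ =>
          Real.Gamma ((n : ℝ) + 1 + ε) /
            (Real.Gamma ((k : ℝ) + 1 + ε) * Real.Gamma (((n - k : ℤ) : ℝ) + 1 + ε)))
          = fun ε : ℝ => Real.Gamma ((a:ℝ) + 1 + ε) /
            (Real.Gamma ((b:ℝ) + 1 + ε) * Real.Gamma (ε - (q:ℝ))) := by
        have e3 : ∀ ε:ℝ, ((n-k:ℤ):ℝ) + 1 + ε = ε - (q:ℝ) := fun ε => by
          push_cast; rw [hq]; ring
        funext ε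
        rw [ha, hb, e3 ε]
      rw [hfun]
      have hL := (tendsto_gamma_fact a).div ((tendsto_gamma_fact b).mul (tendsto_gamma_pole q))
        (mul_ne_zero (fact_ne b) (pole_lim_ne q))
      have hE : Tendsto (fun ε : ℝ => ε) (𝓝[≠] (0:ℝ)) (𝓝 (0:ℝ)) :=
        (continuous_id.tendsto (0:ℝ)).mono_left nhdsWithin_le_nhds
      have hT := hL.mul hE
      rw [mul_zero] at hT
      refine hT.congr' ?_
      filter_upwards [self_mem_nhdsWithin] with ε (hε : ε ≠ 0)
      simp only [Pi.div_apply]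
      show Real.Gamma ((a:ℝ)+1+ε) / (Real.Gamma ((b:ℝ)+1+ε) * (ε * Real.Gamma (ε - (q:ℝ)))) * ε
        = Real.Gamma ((a:ℝ)+1+ε) / (Real.Gamma ((b:ℝ)+1+ε) * Real.Gamma (ε - (q:ℝ)))
      rw [show Real.Gamma ((b:ℝ)+1+ε) * (ε * Real.Gamma (ε - (q:ℝ)))
          = ε * (Real.Gamma ((b:ℝ)+1+ε) * Real.Gamma (ε - (q:ℝ))) from by ring,
        eps_cancelA hε]
  · -- region 2 : k ≥ 0 > n
    rw [if_pos (Or.inr (Or.inl ⟨hk, by omega⟩))]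
    set p := (-n-1).toNat with hp'
    set b := k.toNat with hb'
    set q := (k-n-1).toNat with hq'
    have hpZ : ((p:ℕ):ℤ) = -n-1 := Int.toNat_of_nonneg (by omega)
    have hqZ : ((q:ℕ):ℤ) = k-n-1 := Int.toNat_of_nonneg (by omega)
    have hp : ((p:ℕ):ℝ) = -(n:ℝ)-1 := by exact_mod_cast congrArg (Int.cast : ℤ → ℝ) hpZ
    have hb : ((b:ℕ):ℝ) = (k:ℝ) := by exact_mod_cast congrArg (Int.cast : ℤ → ℝ) (Int.toNat_of_nonneg hk)
    have hq : ((q:ℕ):ℝ) = (k:ℝ)-(n:ℝ)-1 := by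
      have := congrArg (Int.cast : ℤ → ℝ) hqZ
      push_cast at this ⊢; exact_mod_cast this
    have hfun : (fun ε : ℝ =>
        Real.Gamma ((n : ℝ) + 1 + ε) /
          (Real.Gamma ((k : ℝ) + 1 + ε) * Real.Gamma (((n - k : ℤ) : ℝ) + 1 + ε)))
        = fun ε : ℝ => Real.Gamma (ε - (p:ℝ)) /
          (Real.Gamma ((b:ℝ) + 1 + ε) * Real.Gamma (ε - (q:ℝ))) := by
      have e1 : ∀ ε:ℝ, (n:ℝ) + 1 + ε = ε - (p:ℝ) := fun ε => by rw [hp]; ring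
      have e3 : ∀ ε:ℝ, ((n-k:ℤ):ℝ) + 1 + ε = ε - (q:ℝ) := fun ε => by
        push_cast; rw [hq]; ring
      funext ε
      rw [hb, e1 ε, e3 ε]
    rw [hfun]
    have hT := (tendsto_gamma_pole p).div ((tendsto_gamma_fact b).mul (tendsto_gamma_pole q))
      (mul_ne_zero (fact_ne b) (pole_lim_ne q))
    have hval : ((romanCoeff n k : ℚ) : ℝ)
        = ((-1:ℝ)^p / (p.factorial:ℝ)) /
          ((b.factorial:ℝ) * ((-1:ℝ)^q / (q.factorial:ℝ))) := by
      simp only [romanCoeff, romanFactorial, if_pos hk, if_neg (by omega : ¬ (0:ℤ) ≤ n),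
        if_neg (by omega : ¬ (0:ℤ) ≤ n - k)]
      have e1 : -(n-k) - 1 = k-n-1 := by ring
      rw [e1]
      push_cast
      rw [neg_one_zpow_eq_pow (n+1) p (by omega),
        neg_one_zpow_eq_pow (n-k+1) q (by omega)]
    rw [hval]
    refine hT.congr' ?_
    filter_upwards [self_mem_nhdsWithin] with ε (hε : ε ≠ 0)
    simp only [Pi.div_apply]
    show ε * Real.Gamma (ε - (p:ℝ)) / (Real.Gamma ((b:ℝ)+1+ε) * (ε * Real.Gamma (ε - (q:ℝ))))
      = Real.Gamma (ε - (p:ℝ)) / (Real.Gamma ((b:ℝ)+1+ε) * Real.Gamma (ε - (q:ℝ)))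
    rw [show Real.Gamma ((b:ℝ)+1+ε) * (ε * Real.Gamma (ε - (q:ℝ)))
        = ε * (Real.Gamma ((b:ℝ)+1+ε) * Real.Gamma (ε - (q:ℝ))) from by ring,
      mul_div_mul_left _ _ hε]
  · -- region 5 : n ≥ 0 > k, limit 0
    rw [if_neg (by omega)]
    set a := n.toNat with ha'
    set r := (-k-1).toNat with hr'
    set c := (n-k).toNat with hc'
    have ha : ((a:ℕ):ℝ) = (n:ℝ) := by exact_mod_cast congrArg (Int.cast : ℤ → ℝ) (Int.toNat_of_nonneg hn)
    have hr : ((r:ℕ):ℝ) = -(k:ℝ)-1 := by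
      have := congrArg (Int.cast : ℤ → ℝ) (Int.toNat_of_nonneg (by omega : (0:ℤ) ≤ -k-1))
      push_cast at this ⊢; exact_mod_cast this
    have hc : ((c:ℕ):ℝ) = ((n-k:ℤ):ℝ) := by
      exact_mod_cast congrArg (Int.cast : ℤ → ℝ) (Int.toNat_of_nonneg (by omega : (0:ℤ) ≤ n - k))
    have hfun : (fun ε : ℝ =>
        Real.Gamma ((n : ℝ) + 1 + ε) /
          (Real.Gamma ((k : ℝ) + 1 + ε) * Real.Gamma (((n - k : ℤ) : ℝ) + 1 + ε)))
        = fun ε : ℝ => Real.Gamma ((a:ℝ) + 1 + ε) /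
          (Real.Gamma (ε - (r:ℝ)) * Real.Gamma ((c:ℝ) + 1 + ε)) := by
      have e2 : ∀ ε:ℝ, (k:ℝ) + 1 + ε = ε - (r:ℝ) := fun ε => by rw [hr]; ring
      funext ε
      rw [ha, hc, e2 ε]
    rw [hfun]
    have hL := (tendsto_gamma_fact a).div ((tendsto_gamma_pole r).mul (tendsto_gamma_fact c))
      (mul_ne_zero (pole_lim_ne r) (fact_ne c))
    have hE : Tendsto (fun ε : ℝ => ε) (𝓝[≠] (0:ℝ)) (𝓝 (0:ℝ)) :=
      (continuous_id.tendsto (0:ℝ)).mono_left nhdsWithin_le_nhds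
    have hT := hL.mul hE
    rw [mul_zero] at hT
    refine hT.congr' ?_
    filter_upwards [self_mem_nhdsWithin] with ε (hε : ε ≠ 0)
    simp only [Pi.div_apply]
    show Real.Gamma ((a:ℝ)+1+ε) / (ε * Real.Gamma (ε - (r:ℝ)) * Real.Gamma ((c:ℝ)+1+ε)) * ε
      = Real.Gamma ((a:ℝ)+1+ε) / (Real.Gamma (ε - (r:ℝ)) * Real.Gamma ((c:ℝ)+1+ε))
    rw [show ε * Real.Gamma (ε - (r:ℝ)) * Real.Gamma ((c:ℝ)+1+ε)
        = ε * (Real.Gamma (ε - (r:ℝ)) * Real.Gamma ((c:ℝ)+1+ε)) from by ring,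
      eps_cancelA hε]
  · by_cases hkn : k ≤ n
    · -- region 3 : 0 > n ≥ k
      rw [if_pos (Or.inr (Or.inr ⟨by omega, hkn⟩))]
      set p := (-n-1).toNat with hp'
      set r := (-k-1).toNat with hr'
      set c := (n-k).toNat with hc'
      have hp : ((p:ℕ):ℝ) = -(n:ℝ)-1 := by
        have := congrArg (Int.cast : ℤ → ℝ) (Int.toNat_of_nonneg (by omega : (0:ℤ) ≤ -n-1))
        push_cast at this ⊢; exact_mod_cast this
      have hr : ((r:ℕ):ℝ) = -(k:ℝ)-1 := by
        have := congrArg (Int.cast : ℤ → ℝ) (Int.toNat_of_nonneg (by omega : (0:ℤ) ≤ -k-1))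
        push_cast at this ⊢; exact_mod_cast this
      have hc : ((c:ℕ):ℝ) = ((n-k:ℤ):ℝ) := by
        exact_mod_cast congrArg (Int.cast : ℤ → ℝ) (Int.toNat_of_nonneg (by omega : (0:ℤ) ≤ n - k))
      have hfun : (fun ε : ℝ =>
          Real.Gamma ((n : ℝ) + 1 + ε) /
            (Real.Gamma ((k : ℝ) + 1 + ε) * Real.Gamma (((n - k : ℤ) : ℝ) + 1 + ε)))
          = fun ε : ℝ => Real.Gamma (ε - (p:ℝ)) /
            (Real.Gamma (ε - (r:ℝ)) * Real.Gamma ((c:ℝ) + 1 + ε)) := by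
        have e1 : ∀ ε:ℝ, (n:ℝ) + 1 + ε = ε - (p:ℝ) := fun ε => by rw [hp]; ring
        have e2 : ∀ ε:ℝ, (k:ℝ) + 1 + ε = ε - (r:ℝ) := fun ε => by rw [hr]; ring
        funext ε
        rw [hc, e1 ε, e2 ε]
      rw [hfun]
      have hT := (tendsto_gamma_pole p).div ((tendsto_gamma_pole r).mul (tendsto_gamma_fact c))
        (mul_ne_zero (pole_lim_ne r) (fact_ne c))
      have hval : ((romanCoeff n k : ℚ) : ℝ)
          = ((-1:ℝ)^p / (p.factorial:ℝ)) /
            (((-1:ℝ)^r / (r.factorial:ℝ)) * (c.factorial:ℝ)) := by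
        simp only [romanCoeff, romanFactorial, if_neg (by omega : ¬ (0:ℤ) ≤ n),
          if_neg (by omega : ¬ (0:ℤ) ≤ k), if_pos (by omega : (0:ℤ) ≤ n - k)]
        push_cast
        rw [neg_one_zpow_eq_pow (n+1) p (by omega),
          neg_one_zpow_eq_pow (k+1) r (by omega)]
      rw [hval]
      refine hT.congr' ?_
      filter_upwards [self_mem_nhdsWithin] with ε (hε : ε ≠ 0)
      simp only [Pi.div_apply]
      show ε * Real.Gamma (ε - (p:ℝ)) / (ε * Real.Gamma (ε - (r:ℝ)) * Real.Gamma ((c:ℝ)+1+ε))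
        = Real.Gamma (ε - (p:ℝ)) / (Real.Gamma (ε - (r:ℝ)) * Real.Gamma ((c:ℝ)+1+ε))
      rw [show ε * Real.Gamma (ε - (r:ℝ)) * Real.Gamma ((c:ℝ)+1+ε)
          = ε * (Real.Gamma (ε - (r:ℝ)) * Real.Gamma ((c:ℝ)+1+ε)) from by ring,
        mul_div_mul_left _ _ hε]
    · -- region 6 : 0 > k > n, limit 0
      rw [if_neg (by omega)]
      set p := (-n-1).toNat with hp'
      set r := (-k-1).toNat with hr'
      set q := (k-n-1).toNat with hq'
      have hp : ((p:ℕ):ℝ) = -(n:ℝ)-1 := by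
        have := congrArg (Int.cast : ℤ → ℝ) (Int.toNat_of_nonneg (by omega : (0:ℤ) ≤ -n-1))
        push_cast at this ⊢; exact_mod_cast this
      have hr : ((r:ℕ):ℝ) = -(k:ℝ)-1 := by
        have := congrArg (Int.cast : ℤ → ℝ) (Int.toNat_of_nonneg (by omega : (0:ℤ) ≤ -k-1))
        push_cast at this ⊢; exact_mod_cast this
      have hq : ((q:ℕ):ℝ) = (k:ℝ)-(n:ℝ)-1 := by
        have := congrArg (Int.cast : ℤ → ℝ) (Int.toNat_of_nonneg (by omega : (0:ℤ) ≤ k-n-1))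
        push_cast at this ⊢; exact_mod_cast this
      have hfun : (fun ε : ℝ =>
          Real.Gamma ((n : ℝ) + 1 + ε) /
            (Real.Gamma ((k : ℝ) + 1 + ε) * Real.Gamma (((n - k : ℤ) : ℝ) + 1 + ε)))
          = fun ε : ℝ => Real.Gamma (ε - (p:ℝ)) /
            (Real.Gamma (ε - (r:ℝ)) * Real.Gamma (ε - (q:ℝ))) := by
        have e1 : ∀ ε:ℝ, (n:ℝ) + 1 + ε = ε - (p:ℝ) := fun ε => by rw [hp]; ring
        have e2 : ∀ ε:ℝ, (k:ℝ) + 1 + ε = ε - (r:ℝ) := fun ε => by rw [hr]; ring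
        have e3 : ∀ ε:ℝ, ((n-k:ℤ):ℝ) + 1 + ε = ε - (q:ℝ) := fun ε => by
          push_cast; rw [hq]; ring
        funext ε
        rw [e1 ε, e2 ε, e3 ε]
      rw [hfun]
      have hL := (tendsto_gamma_pole p).div ((tendsto_gamma_pole r).mul (tendsto_gamma_pole q))
        (mul_ne_zero (pole_lim_ne r) (pole_lim_ne q))
      have hE : Tendsto (fun ε : ℝ => ε) (𝓝[≠] (0:ℝ)) (𝓝 (0:ℝ)) :=
        (continuous_id.tendsto (0:ℝ)).mono_left nhdsWithin_le_nhds
      have hT := hL.mul hE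
      rw [mul_zero] at hT
      refine hT.congr' ?_
      filter_upwards [self_mem_nhdsWithin] with ε (hε : ε ≠ 0)
      simp only [Pi.div_apply]
      show ε * Real.Gamma (ε - (p:ℝ)) /
          (ε * Real.Gamma (ε - (r:ℝ)) * (ε * Real.Gamma (ε - (q:ℝ)))) * ε
        = Real.Gamma (ε - (p:ℝ)) / (Real.Gamma (ε - (r:ℝ)) * Real.Gamma (ε - (q:ℝ)))
      rw [show ε * Real.Gamma (ε - (r:ℝ)) * (ε * Real.Gamma (ε - (q:ℝ)))
          = ε * (ε * (Real.Gamma (ε - (r:ℝ)) * Real.Gamma (ε - (q:ℝ)))) from by ring,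
        mul_div_mul_left _ _ hε, eps_cancelA hε]
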